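/- If A belongs to the class S₊ (for every λ, dim ker(A−λ) ≥ dim coker(A−λ) whenever at least one of these is finite), then for every B ∈ B(K) and every C ∈ B(K,H): σ_FLI(A) ∪ σ_FLI(B) = σ_FLI(M_C). -/

import Mathlib

open ContinuousLinearMap Cardinal

noncomputable section

universe u

/-- nullity: dimension of the kernel, as a cardinal -/
def alphaDim {E F : Type u} [NormedAddCommGroup E] [NormedSpace ℂ E]
    [NormedAddCommGroup F] [NormedSpace ℂ F] (T : E →L[ℂ] F) : Cardinal :=
  Module.rank ℂ (LinearMap.ker (T : E →ₗ[ℂ] F))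

/-- deficiency: dimension of the cokernel, as a cardinal -/
def betaDim {E F : Type u} [NormedAddCommGroup E] [NormedSpace ℂ E]
    [NormedAddCommGroup F] [NormedSpace ℂ F] (T : E →L[ℂ] F) : Cardinal :=
  Module.rank ℂ (F ⧸ LinearMap.range (T : E →ₗ[ℂ] F))

/-- the upper triangular operator matrix [[A, C],[0, B]] acting on H ⊕ K -/
def MC {H K : Type u} [NormedAddCommGroup H] [NormedSpace ℂ H]
    [NormedAddCommGroup K] [NormedSpace ℂ K]
    (A : H →L[ℂ] H) (B : K →L[ℂ] K) (C : K →L[ℂ] H) : (H × K) →L[ℂ] (H × K) :=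
  (A.comp (fst ℂ H K) + C.comp (snd ℂ H K)).prod (B.comp (snd ℂ H K))

/-- T - λ -/
def shf {E : Type u} [NormedAddCommGroup E] [NormedSpace ℂ E]
    (T : E →L[ℂ] E) (l : ℂ) : E →L[ℂ] E := T - l • ContinuousLinearMap.id ℂ E

/-- Fredholm left invertible spectrum -/
def sigmaFLI {E : Type u} [NormedAddCommGroup E] [NormedSpace ℂ E]
    (T : E →L[ℂ] E) : Set ℂ :=
  {l | ¬ (Function.Injective (shf T l) ∧ betaDim (shf T l) < ℵ₀)}

/-- Fredholm right invertible spectrum -/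
def sigmaFRI {E : Type u} [NormedAddCommGroup E] [NormedSpace ℂ E]
    (T : E →L[ℂ] E) : Set ℂ :=
  {l | ¬ (Function.Surjective (shf T l) ∧ alphaDim (shf T l) < ℵ₀)}

/-- polynomially convex hull: the set together with the bounded components of its complement -/
def polyHull (S : Set ℂ) : Set ℂ :=
  S ∪ {z | z ∉ S ∧ Bornology.IsBounded (connectedComponentIn Sᶜ z)}


section aux1
variable {E F : Type u} [NormedAddCommGroup E] [NormedSpace ℂ E]
  [NormedAddCommGroup F] [NormedSpace ℂ F]

lemma betaDim_eq_zero_iff (T : E →L[ℂ] F) :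
    betaDim T = 0 ↔ Function.Surjective T := by
  rw [betaDim, rank_zero_iff, Submodule.Quotient.subsingleton_iff,
    LinearMap.range_eq_top, ContinuousLinearMap.coe_coe]

lemma alphaDim_eq_zero (T : E →L[ℂ] F) (h : Function.Injective T) :
    alphaDim T = 0 := by
  rw [alphaDim, rank_zero_iff, LinearMap.ker_eq_bot_of_injective h]
  infer_instance
end aux1

section aux2
variable {H K : Type u} [NormedAddCommGroup H] [NormedSpace ℂ H]
  [NormedAddCommGroup K] [NormedSpace ℂ K]

lemma MC_apply (A : H →L[ℂ] H) (B : K →L[ℂ] K) (C : K →L[ℂ] H) (v : H × K) :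
    MC A B C v = (A v.1 + C v.2, B v.2) := rfl

lemma shf_MC (A : H →L[ℂ] H) (B : K →L[ℂ] K) (C : K →L[ℂ] H) (l : ℂ) :
    shf (MC A B C) l = MC (shf A l) (shf B l) C := by
  refine ContinuousLinearMap.ext fun v => Prod.ext ?_ ?_
  · show (A v.1 + C v.2) - l • v.1 = (A v.1 - l • v.1) + C v.2
    abel
  · rfl

lemma range_MC_eq (A : H →L[ℂ] H) (B : K →L[ℂ] K) (C : K →L[ℂ] H)
    (hA : Function.Surjective A) :
    LinearMap.range (MC A B C : (H × K) →ₗ[ℂ] (H × K)) = (LinearMap.range (B : K →ₗ[ℂ] K)).comap (LinearMap.snd ℂ H K) := by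
  ext z
  simp only [LinearMap.mem_range, Submodule.mem_comap, LinearMap.snd_apply]
  constructor
  · rintro ⟨v, rfl⟩
    exact ⟨v.2, rfl⟩
  · rintro ⟨y, hy⟩
    obtain ⟨x, hx⟩ := hA (z.1 - C y)
    refine ⟨(x, y), ?_⟩
    rw [ContinuousLinearMap.coe_coe, MC_apply]
    exact Prod.ext (by simp [hx]) hy

lemma betaDim_MC (A : H →L[ℂ] H) (B : K →L[ℂ] K) (C : K →L[ℂ] H)
    (hA : Function.Surjective A) :
    betaDim (MC A B C) = betaDim B := by
  set φ : (H × K) →ₗ[ℂ] K ⧸ LinearMap.range (B : K →ₗ[ℂ] K) :=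
    (Submodule.mkQ _).comp (LinearMap.snd ℂ H K) with hφ
  have hs : Function.Surjective φ := by
    intro z
    obtain ⟨y, rfl⟩ := Submodule.mkQ_surjective _ z
    exact ⟨(0, y), rfl⟩
  have hker : LinearMap.range (MC A B C : (H × K) →ₗ[ℂ] (H × K)) = LinearMap.ker φ := by
    rw [range_MC_eq A B C hA, hφ, LinearMap.ker_comp, Submodule.ker_mkQ]
  unfold betaDim
  rw [hker]
  exact (φ.quotKerEquivOfSurjective hs).rank_eq
end aux2

variable {H K : Type u}
  [NormedAddCommGroup H] [InnerProductSpace ℂ H] [CompleteSpace H]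
  [NormedAddCommGroup K] [InnerProductSpace ℂ K] [CompleteSpace K]

theorem stmt_19
  [TopologicalSpace.SeparableSpace H] [TopologicalSpace.SeparableSpace K]
    (hH : ¬ FiniteDimensional ℂ H) (hK : ¬ FiniteDimensional ℂ K)
    (A : H →L[ℂ] H) (B : K →L[ℂ] K)
    (hA : ∀ l : ℂ, (alphaDim (shf A l) < ℵ₀ ∨ betaDim (shf A l) < ℵ₀) →
      betaDim (shf A l) ≤ alphaDim (shf A l)) :
    ∀ C : K →L[ℂ] H, sigmaFLI A ∪ sigmaFLI B = sigmaFLI (MC A B C) := by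
  intro C
  ext l
  simp only [sigmaFLI, Set.mem_union, Set.mem_setOf_eq, ← not_and_or, shf_MC]
  refine not_congr ?_
  set A' := shf A l with hA'
  set B' := shf B l with hB'
  have keyA : Function.Injective A' → Function.Surjective A' := by
    intro h
    have h0 : alphaDim A' = 0 := alphaDim_eq_zero _ h
    have h1 := hA l (Or.inl (by rw [← hA', h0]; exact aleph0_pos))
    rw [← hA', h0, nonpos_iff_eq_zero] at h1
    exact (betaDim_eq_zero_iff _).mp h1
  constructor
  · rintro ⟨⟨hAi, _⟩, ⟨hBi, hBb⟩⟩
    have hAs : Function.Surjective A' := keyA hAi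
    constructor
    · rw [injective_iff_map_eq_zero]
      rintro ⟨x, y⟩ h
      have h2 : B' y = 0 := congrArg Prod.snd h
      have hy : y = 0 := hBi (h2.trans (map_zero B').symm)
      have h1 : A' x + C y = 0 := congrArg Prod.fst h
      rw [hy, map_zero, add_zero] at h1
      have hx : x = 0 := hAi (h1.trans (map_zero A').symm)
      exact Prod.ext hx hy
    · rwa [betaDim_MC A' B' C hAs]
  · rintro ⟨hMi, hMb⟩
    have hAi : Function.Injective A' := by
      rw [injective_iff_map_eq_zero]
      intro x hx
      have h : MC A' B' C (x, 0) = 0 := by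
        rw [MC_apply]
        simp [hx]
      have h0 := (injective_iff_map_eq_zero _).mp hMi _ h
      exact congrArg Prod.fst h0
    have hAs : Function.Surjective A' := keyA hAi
    have hBi : Function.Injective B' := by
      rw [injective_iff_map_eq_zero]
      intro y hy
      obtain ⟨x, hx⟩ := hAs (-(C y))
      have h : MC A' B' C (x, y) = 0 := by
        rw [MC_apply]
        simp [hx, hy]
      have h0 := (injective_iff_map_eq_zero _).mp hMi _ h
      exact congrArg Prod.snd h0
    refine ⟨⟨hAi, ?_⟩, hBi, ?_⟩
    · rw [(betaDim_eq_zero_iff _).mpr hAs]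
      exact aleph0_pos
    · rwa [betaDim_MC A' B' C hAs] at hMb
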